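/- Let σ_1 ≤ σ_2 ≤ ⋯ ≤ σ_s be nonnegative integers. Then the following are equivalent: (a) for every integer k with 0 ≤ k ≤ σ_1 + ⋯ + σ_s there exists a subset A ⊆ {1, …, s} with k = Σ_{i∈A} σ_i; (b) σ_1 ≤ 1 and σ_i ≤ σ_1 + ⋯ + σ_{i−1} + 1 for every i with 1 < i ≤ s. -/

import Mathlib

/-- Brown's changemaker theorem (Proposition 6.3 of the paper): a nondecreasing
tuple `σ_1 ≤ ⋯ ≤ σ_s` of nonnegative integers represents every integer
`0 ≤ k ≤ σ_1 + ⋯ + σ_s` as a subset sum if and only if it satisfies the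
changemaker condition `σ_i ≤ σ_1 + ⋯ + σ_{i-1} + 1` for all `i` (which for the
least index reads `σ_1 ≤ 1`). -/
theorem stmt_1 (s : ℕ) (σ : Fin s → ℕ) (hmono : Monotone σ) :
    (∀ k : ℕ, k ≤ ∑ i, σ i → ∃ A : Finset (Fin s), k = ∑ i ∈ A, σ i) ↔
    (∀ i : Fin s, σ i ≤ (∑ j ∈ Finset.univ.filter (· < i), σ j) + 1) := by
  constructor
  · intro h i
    by_contra hc
    push_neg at hc
    set S := ∑ j ∈ Finset.univ.filter (· < i), σ j with hS
    have hk : S + 1 ≤ ∑ j, σ j :=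
      le_trans hc.le (Finset.single_le_sum (fun _ _ => Nat.zero_le _) (Finset.mem_univ i))
    obtain ⟨A, hA⟩ := h (S + 1) hk
    have hsub : A ⊆ Finset.univ.filter (· < i) := by
      intro j hj
      simp only [Finset.mem_filter, Finset.mem_univ, true_and]
      by_contra hji
      have h1 : σ i ≤ σ j := hmono (not_lt.mp hji)
      have h2 : σ j ≤ S + 1 := hA ▸ Finset.single_le_sum (fun _ _ => Nat.zero_le _) hj
      omega
    have : S + 1 ≤ S := hA ▸ Finset.sum_le_sum_of_subset hsub
    omega
  · intro h k hk
    suffices H : ∀ n, n ≤ s → ∀ k, k ≤ ∑ j ∈ Finset.univ.filter (fun j : Fin s => (j : ℕ) < n), σ j →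
        ∃ A, A ⊆ Finset.univ.filter (fun j : Fin s => (j : ℕ) < n) ∧ k = ∑ i ∈ A, σ i by
      have hfil : Finset.univ.filter (fun j : Fin s => (j : ℕ) < s) = Finset.univ := by
        ext j; simp [j.isLt]
      obtain ⟨A, _, hA⟩ := H s le_rfl k (by rwa [hfil])
      exact ⟨A, hA⟩
    intro n
    induction n with
    | zero =>
      intro _ k hk
      simp only [Nat.not_lt_zero, Finset.filter_false, Finset.sum_empty, Nat.le_zero] at hk
      exact ⟨∅, by simp, by simp [hk]⟩
    | succ n ih =>
      intro hn k hk
      have hn' : n < s := hn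
      set i : Fin s := ⟨n, hn'⟩ with hi
      have hni : i ∉ Finset.univ.filter (fun j : Fin s => (j : ℕ) < n) := by simp [hi]
      have hfil : Finset.univ.filter (fun j : Fin s => (j : ℕ) < n + 1) =
          insert i (Finset.univ.filter (fun j : Fin s => (j : ℕ) < n)) := by
        ext j
        simp only [Finset.mem_filter, Finset.mem_univ, true_and, Finset.mem_insert, Fin.ext_iff, hi]
        omega
      rw [hfil, Finset.sum_insert hni] at hk
      by_cases hkS : k ≤ ∑ j ∈ Finset.univ.filter (fun j : Fin s => (j : ℕ) < n), σ j
      · obtain ⟨A, hA1, hA2⟩ := ih hn'.le k hkS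
        exact ⟨A, hA1.trans (by rw [hfil]; exact Finset.subset_insert _ _), hA2⟩
      · push_neg at hkS
        have hσ := h i
        have hfil2 : Finset.univ.filter (· < i) =
            Finset.univ.filter (fun j : Fin s => (j : ℕ) < n) := by
          ext j; simp [Fin.lt_def, hi]
        rw [hfil2] at hσ
        obtain ⟨A, hA1, hA2⟩ := ih hn'.le (k - σ i) (by omega)
        refine ⟨insert i A, ?_, ?_⟩
        · rw [hfil]; exact Finset.insert_subset_insert _ hA1
        · rw [Finset.sum_insert (fun hmem => hni (hA1 hmem)), ← hA2]
          omega
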